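/- For any s in [0,2], there exists a constant C > 0 such that for all positive integers i, the sum over j ≥ 1 of (i/j)^s / (1+|j-i|)^2 is at most C. -/

import Mathlib

private lemma usummable : Summable (fun n : ℕ => 1 / (1 + (n:ℝ)) ^ 2) := by
  have h := Real.summable_one_div_nat_pow.mpr (by norm_num : 1 < 2)
  have h2 := (summable_nat_add_iff 1).mpr h
  convert h2 using 2 with n
  · rfl
  push_cast; ring

theorem stmt0 :
    ∀ s : ℝ, s ∈ Set.Icc (0:ℝ) 2 →
    ∃ C : ℝ, 0 < C ∧ ∀ i : ℕ+,
      (∑' j : ℕ+, ((i:ℝ)/(j:ℝ)) ^ s / (1 + |(j:ℝ) - (i:ℝ)|) ^ 2) ≤ C := by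
  intro s hs
  obtain ⟨hs0, hs2⟩ := hs
  set u : ℕ → ℝ := fun n => 1 / (1 + (n:ℝ)) ^ 2 with hu
  set Z : ℝ := ∑' n, u n with hZ
  have hZpos : 0 < Z := by
    have h0 : (0:ℝ) < u 0 := by simp [hu]
    exact Summable.tsum_pos usummable (fun n => by positivity) 0 h0
  refine ⟨8 * Z, by positivity, ?_⟩
  intro i
  set f : ℕ+ → ℝ := fun j => ((i:ℝ)/(j:ℝ)) ^ s / (1 + |(j:ℝ) - (i:ℝ)|) ^ 2 with hf
  have hi1 : (1:ℝ) ≤ (i:ℝ) := by exact_mod_cast i.one_le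
  -- pointwise bound
  have key : ∀ j : ℕ+, f j ≤ 3 * (1 / (1 + |(j:ℝ) - (i:ℝ)|) ^ 2) + 2 * (1 / (j:ℝ) ^ 2) := by
    intro j
    set d : ℝ := |(j:ℝ) - (i:ℝ)| with hd
    have hj1 : (1:ℝ) ≤ (j:ℝ) := by exact_mod_cast j.one_le
    have hd0 : 0 ≤ d := abs_nonneg _
    have hjne : (j:ℝ) ≠ 0 := by linarith
    have hdne : (1:ℝ) + d ≠ 0 := by linarith
    have hdpos : (0:ℝ) < (1+d)^2 := by nlinarith
    have hijd : (i:ℝ) ≤ (j:ℝ) + d := by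
      have : (i:ℝ) - (j:ℝ) ≤ d := by
        rw [hd, abs_sub_comm]; exact le_abs_self _
      linarith
    have hx : (0:ℝ) < (i:ℝ)/(j:ℝ) := by positivity
    have hxs : ((i:ℝ)/(j:ℝ)) ^ s ≤ 1 + ((i:ℝ)/(j:ℝ)) ^ 2 := by
      rcases le_total ((i:ℝ)/(j:ℝ)) 1 with h | h
      · have h1 := Real.rpow_le_one hx.le h hs0
        nlinarith [sq_nonneg ((i:ℝ)/(j:ℝ))]
      · have h2 : ((i:ℝ)/(j:ℝ)) ^ s ≤ ((i:ℝ)/(j:ℝ)) ^ (2:ℝ) :=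
          Real.rpow_le_rpow_of_exponent_le h hs2
        rw [show (2:ℝ) = ((2:ℕ):ℝ) by norm_num, Real.rpow_natCast] at h2
        linarith
    have hxd : (i:ℝ)/(j:ℝ)/(1+d) ≤ 1/(1+d) + 1/(j:ℝ) := by
      rw [div_div, div_le_iff₀ (by positivity)]
      have e1 : (1/(1+d) + 1/(j:ℝ)) * ((j:ℝ) * (1+d)) = (j:ℝ) + (1+d) := by
        have h1 : (1/(1+d)) * ((j:ℝ)*(1+d)) = (j:ℝ) := by
          field_simp
        have h2 : (1/(j:ℝ)) * ((j:ℝ)*(1+d)) = 1+d := by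
          field_simp
        rw [add_mul, h1, h2]
      rw [e1]; linarith
    have hsq : ((i:ℝ)/(j:ℝ)) ^ 2 / (1+d) ^ 2 ≤ 2 * (1/(1+d)^2) + 2 * (1/(j:ℝ)^2) := by
      have e2 : ((i:ℝ)/(j:ℝ)) ^ 2 / (1+d) ^ 2 = ((i:ℝ)/(j:ℝ)/(1+d)) ^ 2 :=
        (div_pow ((i:ℝ)/(j:ℝ)) (1+d) 2).symm
      rw [e2]
      have h0 : (0:ℝ) ≤ (i:ℝ)/(j:ℝ)/(1+d) := by positivity
      have hXsq : ((i:ℝ)/(j:ℝ)/(1+d)) ^ 2 ≤ (1/(1+d) + 1/(j:ℝ)) ^ 2 :=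
        pow_le_pow_left₀ h0 hxd 2
      have hA : 1/(1+d)^2 = (1/(1+d))^2 := by rw [div_pow, one_pow]
      have hB : 1/(j:ℝ)^2 = (1/(j:ℝ))^2 := by rw [div_pow, one_pow]
      rw [hA, hB]
      nlinarith [sq_nonneg (1/(1+d) - 1/(j:ℝ))]
    have hfj : f j = ((i:ℝ)/(j:ℝ)) ^ s / (1+d) ^ 2 := rfl
    rw [hfj]
    have hstep : ((i:ℝ)/(j:ℝ)) ^ s / (1+d) ^ 2 ≤ (1 + ((i:ℝ)/(j:ℝ)) ^ 2) / (1+d) ^ 2 := by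
      gcongr
    have hsplit : (1 + ((i:ℝ)/(j:ℝ)) ^ 2) / (1+d) ^ 2
        = 1/(1+d)^2 + ((i:ℝ)/(j:ℝ))^2/(1+d)^2 := by
      rw [add_div]
    linarith [hstep, hsq, hsplit.le, hsplit.ge]
  -- nonnegativity
  have hfnn : ∀ j : ℕ+, 0 ≤ f j := fun j => by
    have hx : (0:ℝ) ≤ (i:ℝ)/(j:ℝ) := by positivity
    have := abs_nonneg ((j:ℝ) - (i:ℝ))
    positivity
  -- summability of 1/j^2 over ℕ+
  have hsum2 : Summable (fun j : ℕ+ => 1 / (j:ℝ) ^ 2) := by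
    have h := Real.summable_one_div_nat_pow.mpr (by norm_num : 1 < 2)
    exact h.comp_injective (fun a b h => PNat.coe_injective h)
  -- comparison for summability
  have hcomp : ∀ j : ℕ+, 1 / (1 + |(j:ℝ) - (i:ℝ)|) ^ 2 ≤ (i:ℝ)^2 * (1/(j:ℝ)^2) := by
    intro j
    set d : ℝ := |(j:ℝ) - (i:ℝ)| with hd
    have hj1 : (1:ℝ) ≤ (j:ℝ) := by exact_mod_cast j.one_le
    have hd0 : 0 ≤ d := abs_nonneg _
    have hji : (j:ℝ) ≤ (i:ℝ) * (1 + d) := by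
      have h1 : (j:ℝ) - (i:ℝ) ≤ d := le_abs_self _
      nlinarith
    rw [div_le_iff₀ (by positivity)]
    have h2 : (1:ℝ) ≤ (i:ℝ) * (1+d) / (j:ℝ) := by
      rw [le_div_iff₀ (by positivity)]; linarith
    calc (1:ℝ) ≤ ((i:ℝ) * (1+d) / (j:ℝ))^2 := by nlinarith
      _ = (i:ℝ)^2 * (1/(j:ℝ)^2) * (1+d)^2 := by
          rw [div_pow, mul_pow]; ring
  have hfsummable : Summable f := by
    refine Summable.of_nonneg_of_le hfnn (fun j => ?_) (hsum2.mul_left (3 * (i:ℝ)^2 + 2))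
    have h1 := key j
    have h2 := hcomp j
    have h3 : (0:ℝ) ≤ 1/(j:ℝ)^2 := by positivity
    nlinarith
  -- bound partial sums
  apply Summable.tsum_le_of_sum_le hfsummable
  intro S
  have step1 : ∑ j ∈ S, f j ≤
      3 * ∑ j ∈ S, 1 / (1 + |(j:ℝ) - (i:ℝ)|) ^ 2 + 2 * ∑ j ∈ S, 1 / (j:ℝ) ^ 2 := by
    rw [Finset.mul_sum, Finset.mul_sum, ← Finset.sum_add_distrib]
    exact Finset.sum_le_sum (fun j _ => key j)
  -- bound ∑ 1/j^2 by Z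
  have hZbound : ∑ j ∈ S, 1 / (j:ℝ) ^ 2 ≤ Z := by
    have hinj : ∀ x ∈ S, ∀ y ∈ S, x.natPred = y.natPred → x = y :=
      fun x _ y _ h => PNat.natPred_injective h
    have himg : ∑ n ∈ S.image PNat.natPred, u n = ∑ j ∈ S, u j.natPred :=
      Finset.sum_image hinj
    have hval : ∀ j : ℕ+, u j.natPred = 1 / (j:ℝ) ^ 2 := by
      intro j
      have h1 : j.natPred + 1 = (j:ℕ) := PNat.natPred_add_one j
      simp only [hu]
      congr 1
      have : ((j.natPred : ℕ):ℝ) + 1 = ((j:ℕ):ℝ) := by exact_mod_cast congrArg Nat.cast h1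
      rw [show (1:ℝ) + (j.natPred:ℝ) = ((j.natPred:ℕ):ℝ) + 1 by push_cast; ring, this]
    calc ∑ j ∈ S, 1 / (j:ℝ) ^ 2 = ∑ j ∈ S, u j.natPred := by
          exact Finset.sum_congr rfl (fun j _ => (hval j).symm)
      _ = ∑ n ∈ S.image PNat.natPred, u n := himg.symm
      _ ≤ Z := Summable.sum_le_tsum _ (fun n _ => by positivity) usummable
  -- bound ∑ 1/(1+|j-i|)^2 by 2Z
  have hGbound : ∑ j ∈ S, 1 / (1 + |(j:ℝ) - (i:ℝ)|) ^ 2 ≤ 2 * Z := by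
    set g : ℕ+ → ℝ := fun j => 1 / (1 + |(j:ℝ) - (i:ℝ)|) ^ 2 with hg
    classical
    rw [← Finset.sum_filter_add_sum_filter_not S (fun j => j ≤ i) g]
    have hb1 : ∑ j ∈ S.filter (fun j => j ≤ i), g j ≤ Z := by
      set T := S.filter (fun j => j ≤ i) with hT
      have hinj : ∀ x ∈ T, ∀ y ∈ T, (i:ℕ) - (x:ℕ) = (i:ℕ) - (y:ℕ) → x = y := by
        intro a ha b hb hab
        have hai : (a:ℕ) ≤ (i:ℕ) := by exact_mod_cast (Finset.mem_filter.mp ha).2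
        have hbi : (b:ℕ) ≤ (i:ℕ) := by exact_mod_cast (Finset.mem_filter.mp hb).2
        exact PNat.coe_injective (by omega)
      have himg : ∑ n ∈ T.image (fun j : ℕ+ => (i:ℕ) - (j:ℕ)), u n
          = ∑ j ∈ T, u ((i:ℕ) - (j:ℕ)) := Finset.sum_image hinj
      have hval : ∀ j ∈ T, g j = u ((i:ℕ) - (j:ℕ)) := by
        intro j hj
        have hji : (j:ℕ) ≤ (i:ℕ) := by exact_mod_cast (Finset.mem_filter.mp hj).2
        simp only [hg, hu]
        congr 2
        rw [Nat.cast_sub hji]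
        have hc : ((j:ℕ):ℝ) ≤ ((i:ℕ):ℝ) := by exact_mod_cast hji
        rw [abs_sub_comm, abs_of_nonneg (by linarith)]
      calc ∑ j ∈ T, g j = ∑ j ∈ T, u ((i:ℕ) - (j:ℕ)) := Finset.sum_congr rfl hval
        _ = ∑ n ∈ T.image (fun j : ℕ+ => (i:ℕ) - (j:ℕ)), u n := himg.symm
        _ ≤ Z := Summable.sum_le_tsum _ (fun n _ => by positivity) usummable
    have hb2 : ∑ j ∈ S.filter (fun j => ¬ j ≤ i), g j ≤ Z := by
      set T := S.filter (fun j => ¬ j ≤ i) with hT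
      have hmem : ∀ x ∈ T, (i:ℕ) ≤ (x:ℕ) := by
        intro a ha
        have := (Finset.mem_filter.mp ha).2
        exact_mod_cast (le_of_not_ge this : i ≤ a)
      have hinj : ∀ x ∈ T, ∀ y ∈ T, (x:ℕ) - (i:ℕ) = (y:ℕ) - (i:ℕ) → x = y := by
        intro a ha b hb hab
        have hai := hmem a ha
        have hbi := hmem b hb
        exact PNat.coe_injective (by omega)
      have himg : ∑ n ∈ T.image (fun j : ℕ+ => (j:ℕ) - (i:ℕ)), u n
          = ∑ j ∈ T, u ((j:ℕ) - (i:ℕ)) := Finset.sum_image hinj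
      have hval : ∀ j ∈ T, g j = u ((j:ℕ) - (i:ℕ)) := by
        intro j hj
        have hji : (i:ℕ) ≤ (j:ℕ) := hmem j hj
        simp only [hg, hu]
        congr 2
        rw [Nat.cast_sub hji]
        have hc : ((i:ℕ):ℝ) ≤ ((j:ℕ):ℝ) := by exact_mod_cast hji
        rw [abs_of_nonneg (by linarith)]
      calc ∑ j ∈ T, g j = ∑ j ∈ T, u ((j:ℕ) - (i:ℕ)) := Finset.sum_congr rfl hval
        _ = ∑ n ∈ T.image (fun j : ℕ+ => (j:ℕ) - (i:ℕ)), u n := himg.symm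
        _ ≤ Z := Summable.sum_le_tsum _ (fun n _ => by positivity) usummable
    linarith
  linarith
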